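/- arXiv:2205.09264 — 3 statements merged into one kernel-verified Lean document; each statement's English description precedes it below -/
import Mathlib

section
/- Let (F, G, H) be an adjoint triple of additive functors (F ⊣ G ⊣ H) with F, H : B ⟶ A and G : A ⟶ B between abelian categories. If (U, V) is a balanced pair in B, then (F(U), H(V)) is a balanced pair in A. -/
section BalancedPairs

open CategoryTheory CategoryTheory.Limits

variable {𝒞 : Type*} [Category 𝒞]

/-- `f : c ⟶ M` is a right `C`-approximation. -/
def IsRightApprox (C : Set 𝒞) {c M : 𝒞} (f : c ⟶ M) : Prop :=
  c ∈ C ∧ ∀ c' ∈ C, ∀ g : c' ⟶ M, ∃ h : c' ⟶ c, h ≫ f = g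

/-- `C` is contravariantly finite. -/
def ContravariantlyFinite (C : Set 𝒞) : Prop :=
  ∀ M : 𝒞, ∃ (c : 𝒞) (f : c ⟶ M), IsRightApprox C f

/-- `g : M ⟶ c` is a left `C`-approximation. -/
def IsLeftApprox (C : Set 𝒞) {M c : 𝒞} (g : M ⟶ c) : Prop :=
  c ∈ C ∧ ∀ c' ∈ C, ∀ f : M ⟶ c', ∃ h : c ⟶ c', g ≫ h = f

/-- `C` is covariantly finite. -/
def CovariantlyFinite (C : Set 𝒞) : Prop :=
  ∀ M : 𝒞, ∃ (c : 𝒞) (g : M ⟶ c), IsLeftApprox C g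

/-- `C` is admissible: every right `C`-approximation is an epimorphism. -/
def AdmissibleClass (C : Set 𝒞) : Prop :=
  ∀ (M c : 𝒞) (f : c ⟶ M), IsRightApprox C f → Epi f

variable [Abelian 𝒞]

/-- A complex `L` is right `X`-acyclic: `Hom(x, L)` is acyclic for every `x ∈ X`. -/
def RightXAcyclic (Xc : Set 𝒞) (L : CochainComplex 𝒞 ℤ) : Prop :=
  ∀ x ∈ Xc, ∀ i : ℤ, ∀ f : x ⟶ L.X i, f ≫ L.d i (i + 1) = 0 →
    ∃ g : x ⟶ L.X (i - 1), g ≫ L.d (i - 1) i = f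

/-- A complex `L` is left `Y`-acyclic: `Hom(L, y)` is acyclic for every `y ∈ Y`. -/
def LeftYAcyclic (Yc : Set 𝒞) (L : CochainComplex 𝒞 ℤ) : Prop :=
  ∀ y ∈ Yc, ∀ i : ℤ, ∀ f : L.X i ⟶ y, L.d (i - 1) i ≫ f = 0 →
    ∃ g : L.X (i + 1) ⟶ y, L.d i (i + 1) ≫ g = f

/-- `(X, Y)` is a balanced pair: `X` is contravariantly finite, `Y` is covariantly finite, and
the right `X`-acyclic complexes coincide with the left `Y`-acyclic complexes. -/
def BalancedPair (Xc Yc : Set 𝒞) : Prop :=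
  ContravariantlyFinite Xc ∧ CovariantlyFinite Yc ∧
    ∀ L : CochainComplex 𝒞 ℤ, RightXAcyclic Xc L ↔ LeftYAcyclic Yc L

end BalancedPairs

/-- The essential image of a class of objects under a functor. -/
def imCl {𝒞 𝒟 : Type*} [CategoryTheory.Category 𝒞] [CategoryTheory.Category 𝒟]
    (F : CategoryTheory.Functor 𝒞 𝒟) (C : Set 𝒞) : Set 𝒟 :=
  {b | ∃ a ∈ C, Nonempty (F.obj a ≅ b)}

open CategoryTheory CategoryTheory.Limits

/-- If `(F, G, H)` is an adjoint triple of additive functors between abelian categories and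
`(U, V)` is a balanced pair in `B`, then `(F(U), H(V))` is a balanced pair in `A`. -/
theorem balancedPair_of_adjoint_triple {B A : Type*} [Category B] [Category A]
    [Abelian B] [Abelian A]
    (F : B ⥤ A) (G : A ⥤ B) (H : B ⥤ A) [F.Additive] [G.Additive] [H.Additive]
    (adj₁ : F ⊣ G) (adj₂ : G ⊣ H)
    (U V : Set B) (hbp : BalancedPair U V) :
    BalancedPair (imCl F U) (imCl H V) := by
  obtain ⟨hU, hV, hiff⟩ := hbp
  -- abbreviation: apply G to a complex in A
  let mapC : CochainComplex A ℤ → CochainComplex B ℤ :=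
    fun L => (G.mapHomologicalComplex (ComplexShape.up ℤ)).obj L
  have hzero₁ : ∀ (x : B) (M : A), (adj₁.homEquiv x M).symm 0 = 0 := by
    intro x M
    simp [Adjunction.homEquiv_counit]
  have hzero₂ : ∀ (M : A) (v : B), adj₂.homEquiv M v (0 : G.obj M ⟶ v) = 0 := by
    intro M v
    simp [Adjunction.homEquiv_unit]
  refine ⟨?_, ?_, ?_⟩
  · -- contravariantly finite
    intro M
    obtain ⟨u, f, hu, happ⟩ := hU (G.obj M)
    refine ⟨F.obj u, (adj₁.homEquiv u M).symm f, ⟨u, hu, ⟨Iso.refl _⟩⟩, ?_⟩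
    rintro c' ⟨u', hu', ⟨e⟩⟩ g
    obtain ⟨h, hh⟩ := happ u' hu' (adj₁.homEquiv u' M (e.hom ≫ g))
    refine ⟨e.inv ≫ F.map h, ?_⟩
    rw [Category.assoc, ← Adjunction.homEquiv_naturality_left_symm, hh,
      Equiv.symm_apply_apply, e.inv_hom_id_assoc]
  · -- covariantly finite
    intro M
    obtain ⟨v, g, hv, happ⟩ := hV (G.obj M)
    refine ⟨H.obj v, adj₂.homEquiv M v g, ⟨v, hv, ⟨Iso.refl _⟩⟩, ?_⟩
    rintro c' ⟨v', hv', ⟨e⟩⟩ f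
    obtain ⟨h, hh⟩ := happ v' hv' ((adj₂.homEquiv M v').symm (f ≫ e.inv))
    refine ⟨H.map h ≫ e.hom, ?_⟩
    rw [← Category.assoc, ← Adjunction.homEquiv_naturality_right, hh,
      Equiv.apply_symm_apply, Category.assoc, e.inv_hom_id, Category.comp_id]
  · -- acyclicity
    intro L
    have h1 : RightXAcyclic (imCl F U) L ↔ RightXAcyclic U (mapC L) := by
      constructor
      · intro hL x hx i f hf
        change x ⟶ G.obj (L.X i) at f
        have hf' : (adj₁.homEquiv x (L.X i)).symm f ≫ L.d i (i + 1) = 0 := by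
          have := Adjunction.homEquiv_naturality_right_symm adj₁ f (L.d i (i + 1))
          rw [← this]
          have : f ≫ G.map (L.d i (i + 1)) = 0 := hf
          rw [this, hzero₁]
        obtain ⟨g, hg⟩ := hL (F.obj x) ⟨x, hx, ⟨Iso.refl _⟩⟩ i
          ((adj₁.homEquiv x (L.X i)).symm f) hf'
        refine ⟨adj₁.homEquiv x (L.X (i - 1)) g, ?_⟩
        show adj₁.homEquiv x (L.X (i - 1)) g ≫ G.map (L.d (i - 1) i) = f
        rw [← Adjunction.homEquiv_naturality_right, hg, Equiv.apply_symm_apply]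
      · intro hL x hx i f hf
        obtain ⟨u, hu, ⟨e⟩⟩ := hx
        have hf' : adj₁.homEquiv u (L.X i) (e.hom ≫ f) ≫ G.map (L.d i (i + 1)) = 0 := by
          rw [← Adjunction.homEquiv_naturality_right, Category.assoc, hf,
            Limits.comp_zero]
          have : (adj₁.homEquiv u (L.X (i + 1))).symm 0 = 0 := hzero₁ _ _
          rw [← this, Equiv.apply_symm_apply]
        obtain ⟨g, hg⟩ := hL u hu i (adj₁.homEquiv u (L.X i) (e.hom ≫ f)) hf'
        change u ⟶ G.obj (L.X (i - 1)) at g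
        refine ⟨e.inv ≫ (adj₁.homEquiv u (L.X (i - 1))).symm g, ?_⟩
        rw [Category.assoc, ← Adjunction.homEquiv_naturality_right_symm]
        have hg' : g ≫ G.map (L.d (i - 1) i) = adj₁.homEquiv u (L.X i) (e.hom ≫ f) := hg
        rw [hg', Equiv.symm_apply_apply, e.inv_hom_id_assoc]
    have h2 : LeftYAcyclic (imCl H V) L ↔ LeftYAcyclic V (mapC L) := by
      constructor
      · intro hL y hy i f hf
        change G.obj (L.X i) ⟶ y at f
        have hf' : L.d (i - 1) i ≫ adj₂.homEquiv (L.X i) y f = 0 := by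
          have := Adjunction.homEquiv_naturality_left adj₂ (L.d (i - 1) i) f
          rw [← this]
          have hz : G.map (L.d (i - 1) i) ≫ f = 0 := hf
          rw [hz, hzero₂]
        obtain ⟨g, hg⟩ := hL (H.obj y) ⟨y, hy, ⟨Iso.refl _⟩⟩ i
          (adj₂.homEquiv (L.X i) y f) hf'
        refine ⟨(adj₂.homEquiv (L.X (i + 1)) y).symm g, ?_⟩
        show G.map (L.d i (i + 1)) ≫ (adj₂.homEquiv (L.X (i + 1)) y).symm g = f
        rw [← Adjunction.homEquiv_naturality_left_symm, hg, Equiv.symm_apply_apply]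
      · intro hL y hy i f hf
        obtain ⟨v, hv, ⟨e⟩⟩ := hy
        have hf' : G.map (L.d (i - 1) i) ≫ (adj₂.homEquiv (L.X i) v).symm (f ≫ e.inv) = 0 := by
          rw [← Adjunction.homEquiv_naturality_left_symm, ← Category.assoc, hf,
            Limits.zero_comp]
          have : adj₂.homEquiv (L.X (i - 1)) v (0 : G.obj (L.X (i - 1)) ⟶ v) = 0 :=
            hzero₂ _ _
          rw [← this, Equiv.symm_apply_apply]
        obtain ⟨g, hg⟩ := hL v hv i ((adj₂.homEquiv (L.X i) v).symm (f ≫ e.inv)) hf'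
        change G.obj (L.X (i + 1)) ⟶ v at g
        refine ⟨adj₂.homEquiv (L.X (i + 1)) v g ≫ e.hom, ?_⟩
        rw [← Category.assoc, ← Adjunction.homEquiv_naturality_left]
        have hg' : G.map (L.d i (i + 1)) ≫ g =
            (adj₂.homEquiv (L.X i) v).symm (f ≫ e.inv) := hg
        rw [hg', Equiv.apply_symm_apply, Category.assoc, e.inv_hom_id, Category.comp_id]
    rw [h1, h2, hiff]
end

section
/- Let R(A', A, A'') be a recollement of abelian categories with balanced pairs (X'', Y'') in A''. With X, Y defined as in the recollement-glued classes (X = {X : i*X ∈ X', j*X ∈ X''}, Y = {Y : i^!Y ∈ Y', j*Y ∈ Y''}), the pair (j_! j*(X), j_* j*(Y)) = (j_!(X''), j_*(Y'')) is a balanced pair in A. Moreover, if (X'', Y'') is admissible and j* is faithful, then (j_!(X''), j_*(Y'')) is admissible. -/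
open CategoryTheory CategoryTheory.Limits

/-- A recollement of abelian categories `R(A', A, A'')`: adjoint triples
`(i*, i_*, i^!)` and `(j_!, j*, j_*)`, with `i_*, j_!, j_*` fully faithful and
`Im i_* = Ker j*`. -/
structure Recollement (A' : Type*) (A : Type*) (A'' : Type*)
    [Category A'] [Category A] [Category A''] where
  /-- `i_* : A' ⥤ A` -/
  iₛ : A' ⥤ A
  /-- `i* : A ⥤ A'` -/
  iStar : A ⥤ A'
  /-- `i^! : A ⥤ A'` -/
  iShriek : A ⥤ A'
  /-- `j_! : A'' ⥤ A` -/
  jLShriek : A'' ⥤ A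
  /-- `j* : A ⥤ A''` -/
  jStar : A ⥤ A''
  /-- `j_* : A'' ⥤ A` -/
  jₛ : A'' ⥤ A
  adj₁ : iStar ⊣ iₛ
  adj₂ : iₛ ⊣ iShriek
  adj₃ : jLShriek ⊣ jStar
  adj₄ : jStar ⊣ jₛ
  ff_iₛ : iₛ.FullyFaithful
  ff_jLShriek : jLShriek.FullyFaithful
  ff_jₛ : jₛ.FullyFaithful
  im_eq_ker : ∀ X : A, (∃ Y : A', Nonempty (iₛ.obj Y ≅ X)) ↔ IsZero (jStar.obj X)

open CategoryTheory CategoryTheory.Limits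

section Helpers

open CategoryTheory CategoryTheory.Limits

variable {C D : Type*} [Category C] [Category D] [HasZeroMorphisms C] [HasZeroMorphisms D]
  {F : C ⥤ D} {G : D ⥤ C}

lemma homEquiv_zero' (adj : F ⊣ G) [G.PreservesZeroMorphisms] (X : C) (Y : D) :
    (adj.homEquiv X Y) 0 = 0 := by
  rw [Adjunction.homEquiv_unit, Functor.map_zero, Limits.comp_zero]

lemma homEquiv_symm_zero' (adj : F ⊣ G) [F.PreservesZeroMorphisms] (X : C) (Y : D) :
    (adj.homEquiv X Y).symm 0 = 0 := by
  rw [Adjunction.homEquiv_counit, Functor.map_zero, Limits.zero_comp]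

end Helpers


/-- A class of objects closed under isomorphisms and containing the zero objects. -/
def IsAdditiveClass {𝒞 : Type*} [Category 𝒞] (C : Set 𝒞) : Prop :=
  (∀ ⦃X Y : 𝒞⦄, (X ≅ Y) → X ∈ C → Y ∈ C) ∧ (∀ Z : 𝒞, IsZero Z → Z ∈ C)

/-- Given a recollement and balanced pairs `(X', Y')` in `A'` and `(X'', Y'')` in `A''`, with
the glued classes `X = {X | i*X ∈ X', j*X ∈ X''}` and `Y = {Y | i^!Y ∈ Y', j*Y ∈ Y''}`,
the pair `(j_! j*(X), j_* j*(Y)) = (j_!(X''), j_*(Y''))` is a balanced pair in `A`; moreover,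
if `(X'', Y'')` is admissible and `j*` is faithful, then it is admissible. -/
theorem recollement_glued_balancedPair {A' A A'' : Type*}
    [Category A'] [Category A] [Category A'']
    [Abelian A'] [Abelian A] [Abelian A'']
    (R : Recollement A' A A'')
    (X' Y' : Set A') (X'' Y'' : Set A'')
    (hX' : IsAdditiveClass X') (hY' : IsAdditiveClass Y')
    (hX'' : IsAdditiveClass X'') (hY'' : IsAdditiveClass Y'')
    (hbp' : BalancedPair X' Y') (hbp'' : BalancedPair X'' Y'') :
    (imCl R.jLShriek (imCl R.jStar {X : A | R.iStar.obj X ∈ X' ∧ R.jStar.obj X ∈ X''}) =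
        imCl R.jLShriek X'' ∧
      imCl R.jₛ (imCl R.jStar {Y : A | R.iShriek.obj Y ∈ Y' ∧ R.jStar.obj Y ∈ Y''}) =
        imCl R.jₛ Y'') ∧
    BalancedPair (imCl R.jLShriek X'') (imCl R.jₛ Y'') ∧
    ((AdmissibleClass X'' ∧ R.jStar.Faithful) →
      AdmissibleClass (imCl R.jLShriek X'')) := by
  haveI := R.ff_jLShriek.full
  haveI := R.ff_jLShriek.faithful
  haveI := R.ff_jₛ.full
  haveI := R.ff_jₛ.faithful
  haveI := R.adj₁.isLeftAdjoint
  haveI := R.adj₁.isRightAdjoint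
  haveI := R.adj₂.isLeftAdjoint
  haveI := R.adj₂.isRightAdjoint
  haveI := R.adj₃.isLeftAdjoint
  haveI := R.adj₃.isRightAdjoint
  haveI := R.adj₄.isLeftAdjoint
  haveI := R.adj₄.isRightAdjoint
  -- `i* j_!` is zero
  have hz1 : ∀ x : A'', IsZero (R.iStar.obj (R.jLShriek.obj x)) := by
    intro x
    rw [IsZero.iff_id_eq_zero]
    have hZ : IsZero (R.jStar.obj (R.iₛ.obj (R.iStar.obj (R.jLShriek.obj x)))) :=
      (R.im_eq_ker _).mp ⟨_, ⟨Iso.refl _⟩⟩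
    have hu : (R.adj₁.homEquiv (R.jLShriek.obj x) _) (𝟙 (R.iStar.obj (R.jLShriek.obj x))) = 0 := by
      have h0 : (R.adj₃.homEquiv x _)
          ((R.adj₁.homEquiv (R.jLShriek.obj x) _) (𝟙 (R.iStar.obj (R.jLShriek.obj x)))) = 0 :=
        hZ.eq_zero_of_tgt _
      have := congrArg (R.adj₃.homEquiv x _).symm h0
      rwa [Equiv.symm_apply_apply, homEquiv_symm_zero'] at this
    have := congrArg (R.adj₁.homEquiv (R.jLShriek.obj x) _).symm hu
    rwa [Equiv.symm_apply_apply, homEquiv_symm_zero'] at this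
  -- `i^! j_*` is zero
  have hz2 : ∀ y : A'', IsZero (R.iShriek.obj (R.jₛ.obj y)) := by
    intro y
    rw [IsZero.iff_id_eq_zero]
    have hZ : IsZero (R.jStar.obj (R.iₛ.obj (R.iShriek.obj (R.jₛ.obj y)))) :=
      (R.im_eq_ker _).mp ⟨_, ⟨Iso.refl _⟩⟩
    have hu : (R.adj₂.homEquiv _ _).symm (𝟙 (R.iShriek.obj (R.jₛ.obj y))) = 0 := by
      have h0 : (R.adj₄.homEquiv (R.iₛ.obj (R.iShriek.obj (R.jₛ.obj y))) y).symm
          ((R.adj₂.homEquiv _ _).symm (𝟙 (R.iShriek.obj (R.jₛ.obj y)))) = 0 :=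
        hZ.eq_zero_of_src _
      have := congrArg (R.adj₄.homEquiv _ y) h0
      rwa [Equiv.apply_symm_apply, homEquiv_zero'] at this
    have := congrArg (R.adj₂.homEquiv _ _) hu
    rwa [Equiv.apply_symm_apply, homEquiv_zero'] at this
  refine ⟨⟨?_, ?_⟩, ⟨?_, ?_, ?_⟩, ?_⟩
  · -- first set equality
    ext b
    constructor
    · rintro ⟨a, ⟨X0, ⟨hX1, hX2⟩, ⟨e0⟩⟩, ⟨e⟩⟩
      exact ⟨a, hX''.1 e0 hX2, ⟨e⟩⟩
    · rintro ⟨a, ha, ⟨e⟩⟩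
      refine ⟨R.jStar.obj (R.jLShriek.obj a), ⟨R.jLShriek.obj a,
        ⟨hX'.2 _ (hz1 a), hX''.1 (asIso (R.adj₃.unit.app a)) ha⟩, ⟨Iso.refl _⟩⟩,
        ⟨R.jLShriek.mapIso (asIso (R.adj₃.unit.app a)).symm ≪≫ e⟩⟩
  · -- second set equality
    ext b
    constructor
    · rintro ⟨a, ⟨Y0, ⟨hY1, hY2⟩, ⟨e0⟩⟩, ⟨e⟩⟩
      exact ⟨a, hY''.1 e0 hY2, ⟨e⟩⟩
    · rintro ⟨a, ha, ⟨e⟩⟩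
      refine ⟨R.jStar.obj (R.jₛ.obj a), ⟨R.jₛ.obj a,
        ⟨hY'.2 _ (hz2 a), hY''.1 (asIso (R.adj₄.counit.app a)).symm ha⟩, ⟨Iso.refl _⟩⟩,
        ⟨R.jₛ.mapIso (asIso (R.adj₄.counit.app a)) ≪≫ e⟩⟩
  · -- contravariantly finite
    intro M
    obtain ⟨c'', f'', hc'', happrox⟩ := hbp''.1 (R.jStar.obj M)
    refine ⟨R.jLShriek.obj c'', R.jLShriek.map f'' ≫ R.adj₃.counit.app M,
      ⟨c'', hc'', ⟨Iso.refl _⟩⟩, ?_⟩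
    rintro c' ⟨a, ha, ⟨e⟩⟩ g
    obtain ⟨h'', hh⟩ := happrox a ha ((R.adj₃.homEquiv a M) (e.hom ≫ g))
    refine ⟨e.inv ≫ R.jLShriek.map h'', ?_⟩
    have key : R.jLShriek.map (h'' ≫ f'') ≫ R.adj₃.counit.app M = e.hom ≫ g := by
      have := congrArg (R.adj₃.homEquiv a M).symm hh
      rw [Equiv.symm_apply_apply, Adjunction.homEquiv_counit] at this
      exact this
    rw [Functor.map_comp, Category.assoc] at key
    simp only [Category.assoc]
    rw [key, Iso.inv_hom_id_assoc]
  · -- covariantly finite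
    intro M
    obtain ⟨c'', g'', hc'', happrox⟩ := hbp''.2.1 (R.jStar.obj M)
    refine ⟨R.jₛ.obj c'', R.adj₄.unit.app M ≫ R.jₛ.map g'',
      ⟨c'', hc'', ⟨Iso.refl _⟩⟩, ?_⟩
    rintro c' ⟨a, ha, ⟨e⟩⟩ f
    obtain ⟨h'', hh⟩ := happrox a ha ((R.adj₄.homEquiv M a).symm (f ≫ e.inv))
    refine ⟨R.jₛ.map h'' ≫ e.hom, ?_⟩
    have key : R.adj₄.unit.app M ≫ R.jₛ.map (g'' ≫ h'') = f ≫ e.inv := by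
      have := congrArg (R.adj₄.homEquiv M a) hh
      rw [Equiv.apply_symm_apply, Adjunction.homEquiv_unit] at this
      exact this
    rw [Functor.map_comp, ← Category.assoc] at key
    rw [← Category.assoc, key, Category.assoc, Iso.inv_hom_id, Category.comp_id]
  · -- acyclicity coincidence
    intro L
    let L'' : CochainComplex A'' ℤ :=
      { X := fun i => R.jStar.obj (L.X i)
        d := fun i j => R.jStar.map (L.d i j)
        shape := fun i j h => by rw [L.shape i j h, Functor.map_zero]
        d_comp_d' := fun i j k _ _ => by
          rw [← Functor.map_comp, L.d_comp_d, Functor.map_zero] }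
    have h1 : RightXAcyclic (imCl R.jLShriek X'') L ↔ RightXAcyclic X'' L'' := by
      constructor
      · intro H x hx i f hf
        have hf' : (R.adj₃.homEquiv x (L.X i)).symm f ≫ L.d i (i + 1) = 0 := by
          apply (R.adj₃.homEquiv x _).injective
          rw [Adjunction.homEquiv_naturality_right, Equiv.apply_symm_apply, homEquiv_zero']
          exact hf
        obtain ⟨g, hg⟩ := H (R.jLShriek.obj x) ⟨x, hx, ⟨Iso.refl _⟩⟩ i _ hf'
        refine ⟨(R.adj₃.homEquiv x _) g, ?_⟩
        show (R.adj₃.homEquiv x _) g ≫ R.jStar.map (L.d (i - 1) i) = f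
        rw [← Adjunction.homEquiv_naturality_right, hg, Equiv.apply_symm_apply]
      · intro H c' hc' i f hf
        obtain ⟨a, ha, ⟨e⟩⟩ := hc'
        have hφ : (R.adj₃.homEquiv a (L.X i)) (e.hom ≫ f) ≫ L''.d i (i + 1) = 0 := by
          show _ ≫ R.jStar.map (L.d i (i + 1)) = 0
          rw [← Adjunction.homEquiv_naturality_right, Category.assoc, hf,
            Limits.comp_zero, homEquiv_zero']
        obtain ⟨ψ, hψ⟩ := H a ha i _ hφ
        refine ⟨e.inv ≫ (R.adj₃.homEquiv a (L.X (i - 1))).symm ψ, ?_⟩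
        have key : (R.adj₃.homEquiv a (L.X (i - 1))).symm ψ ≫ L.d (i - 1) i = e.hom ≫ f := by
          apply (R.adj₃.homEquiv a _).injective
          rw [Adjunction.homEquiv_naturality_right, Equiv.apply_symm_apply]
          exact hψ
        rw [Category.assoc, key, Iso.inv_hom_id_assoc]
    have h2 : LeftYAcyclic (imCl R.jₛ Y'') L ↔ LeftYAcyclic Y'' L'' := by
      constructor
      · intro H y hy i f hf
        have hf' : L.d (i - 1) i ≫ (R.adj₄.homEquiv (L.X i) y) f = 0 := by
          rw [← Adjunction.homEquiv_naturality_left]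
          have : R.jStar.map (L.d (i - 1) i) ≫ f = 0 := hf
          rw [this, homEquiv_zero']
        obtain ⟨g, hg⟩ := H (R.jₛ.obj y) ⟨y, hy, ⟨Iso.refl _⟩⟩ i _ hf'
        refine ⟨(R.adj₄.homEquiv (L.X (i + 1)) y).symm g, ?_⟩
        show R.jStar.map (L.d i (i + 1)) ≫ _ = f
        rw [← Adjunction.homEquiv_naturality_left_symm, hg, Equiv.symm_apply_apply]
      · intro H y' hy' i f hf
        obtain ⟨a, ha, ⟨e⟩⟩ := hy'
        have hφ : L''.d (i - 1) i ≫ (R.adj₄.homEquiv (L.X i) a).symm (f ≫ e.inv) = 0 := by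
          show R.jStar.map (L.d (i - 1) i) ≫ _ = 0
          rw [← Adjunction.homEquiv_naturality_left_symm, ← Category.assoc, hf,
            Limits.zero_comp, homEquiv_symm_zero']
        obtain ⟨ψ, hψ⟩ := H a ha i _ hφ
        refine ⟨(R.adj₄.homEquiv (L.X (i + 1)) a) ψ ≫ e.hom, ?_⟩
        have key : L.d i (i + 1) ≫ (R.adj₄.homEquiv (L.X (i + 1)) a) ψ = f ≫ e.inv := by
          apply (R.adj₄.homEquiv (L.X i) a).symm.injective
          rw [Adjunction.homEquiv_naturality_left_symm, Equiv.symm_apply_apply]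
          exact hψ
        rw [← Category.assoc, key, Category.assoc, Iso.inv_hom_id, Category.comp_id]
    rw [h1, h2]
    exact hbp''.2.2 L''
  · -- admissibility
    rintro ⟨hadm, hfaith⟩ M c f ⟨⟨a, ha, ⟨e⟩⟩, happ⟩
    haveI := hfaith
    have hepi'' : Epi ((R.adj₃.homEquiv a M) (e.hom ≫ f)) := by
      refine hadm (R.jStar.obj M) a _ ⟨ha, ?_⟩
      intro a' ha' g
      obtain ⟨h, hh⟩ := happ (R.jLShriek.obj a') ⟨a', ha', ⟨Iso.refl _⟩⟩
        ((R.adj₃.homEquiv a' M).symm g)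
      refine ⟨R.ff_jLShriek.preimage (h ≫ e.inv), ?_⟩
      rw [← Adjunction.homEquiv_naturality_left, R.ff_jLShriek.map_preimage,
        Category.assoc, Iso.inv_hom_id_assoc, hh, Equiv.apply_symm_apply]
    rw [Adjunction.homEquiv_unit] at hepi''
    haveI := hepi''
    haveI : Epi (R.jStar.map (e.hom ≫ f)) := epi_of_epi (R.adj₃.unit.app a) _
    haveI : Epi (e.hom ≫ f) := R.jStar.epi_of_epi_map this
    exact epi_of_epi e.hom f
end

section
/- Let T be X-self-orthogonal with respect to an admissible balanced pair (X, Y) in an abelian category A. Then Pres^n_X(_T X) = Pres^n_X(T) for every n ≥ 1. -/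
open CategoryTheory CategoryTheory.Limits

section Tilting

variable {𝒞 : Type*} [Category 𝒞] [Abelian 𝒞]

/-- A left `X`-resolution of `M`: a complex `⋯ → P 1 → P 0 → M → 0` with all `P n ∈ Xc`
which is acyclic under `Hom(x, −)` for every `x ∈ Xc`. -/
structure LeftRes (Xc : Set 𝒞) (M : 𝒞) where
  P : ℕ → 𝒞
  d : ∀ n, P (n + 1) ⟶ P n
  ε : P 0 ⟶ M
  mem : ∀ n, P n ∈ Xc
  dd : ∀ n, d (n + 1) ≫ d n = 0
  dε : d 0 ≫ ε = 0
  homSurj : ∀ x ∈ Xc, ∀ f : x ⟶ M, ∃ g : x ⟶ P 0, g ≫ ε = f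
  homExact₀ : ∀ x ∈ Xc, ∀ f : x ⟶ P 0, f ≫ ε = 0 → ∃ g : x ⟶ P 1, g ≫ d 0 = f
  homExact : ∀ x ∈ Xc, ∀ n, ∀ f : x ⟶ P (n + 1), f ≫ d n = 0 →
    ∃ g : x ⟶ P (n + 2), g ≫ d (n + 1) = f

/-- `Ext^i_X(T, M) = 0` for all `i ≥ 1`: for every left `X`-resolution of `T`, the complex
`Hom(P•, M)` is exact in all positive degrees. -/
def ExtVanish (Xc : Set 𝒞) (T M : 𝒞) : Prop :=
  ∀ (R : LeftRes Xc T) (i : ℕ) (f : R.P (i + 1) ⟶ M), R.d (i + 1) ≫ f = 0 →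
    ∃ g : R.P i ⟶ M, R.d i ≫ g = f

/-- `K ∈ Add T`: `K` is a direct summand of a coproduct of copies of `T`. -/
def InAdd [HasCoproducts.{0} 𝒞] (T K : 𝒞) : Prop :=
  ∃ (I : Type) (J : 𝒞), Nonempty ((K ⊞ J) ≅ ∐ fun _ : I => T)

/-- `T` is `X`-self-orthogonal: `Ext^{i≥1}_X(T, T^{(I)}) = 0` for every set `I`. -/
def XSelfOrth [HasCoproducts.{0} 𝒞] (Xc : Set 𝒞) (T : 𝒞) : Prop :=
  ∀ I : Type, ExtVanish Xc T (∐ fun _ : I => T)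

/-- `0 → K → B → M → 0` is an `X`-exact short exact sequence: a short exact sequence which
stays exact under `Hom(x, −)` for every `x ∈ Xc`. -/
def IsXSes (Xc : Set 𝒞) {K B M : 𝒞} (i : K ⟶ B) (g : B ⟶ M) : Prop :=
  Mono i ∧ Epi g ∧ (∃ w : i ≫ g = 0, (ShortComplex.mk i g w).Exact) ∧
    ∀ x ∈ Xc, ∀ f : x ⟶ M, ∃ h : x ⟶ B, h ≫ g = f

/-- `PresC Xc C n M`: there is an `X`-exact sequence `C_n → ⋯ → C_1 → M → 0` with all
`C_i ∈ C` (defined by splicing `X`-exact short exact sequences). -/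
def PresC (Xc : Set 𝒞) (C : Set 𝒞) : ℕ → 𝒞 → Prop
  | 0, _ => True
  | n + 1, M => ∃ (B K : 𝒞) (i : K ⟶ B) (g : B ⟶ M),
      B ∈ C ∧ IsXSes Xc i g ∧ PresC Xc C n K

/-- `M ∈ _T X`: `M` has an `X`-exact `Add T`-resolution with all syzygies
(including `M` itself) in `T^{X⊥}`. -/
def TXClass [HasCoproducts.{0} 𝒞] (Xc : Set 𝒞) (T M : 𝒞) : Prop :=
  ∃ (K : ℕ → 𝒞) (Tn : ℕ → 𝒞) (i : ∀ n, K (n + 1) ⟶ Tn n) (g : ∀ n, Tn n ⟶ K n),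
    K 0 = M ∧ (∀ n, InAdd T (Tn n)) ∧ (∀ n, ExtVanish Xc T (K n)) ∧
    ∀ n, IsXSes Xc (i n) (g n)

/-- `L ∈ (\widehat{Add_X T})_{n+1}`: there is an `X`-exact sequence
`0 → T_{n+1} → ⋯ → T_1 → L → 0` with all `T_i ∈ Add T`. -/
def AddHatN [HasCoproducts.{0} 𝒞] (Xc : Set 𝒞) (T : 𝒞) : ℕ → 𝒞 → Prop
  | 0, L => InAdd T L
  | n + 1, L => ∃ (B K : 𝒞) (i : K ⟶ B) (g : B ⟶ L),
      InAdd T B ∧ IsXSes Xc i g ∧ AddHatN Xc T n K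

/-- `CoresAdd Xc T n M`: there is an `X`-exact sequence `0 → M → T_0 → ⋯ → T_n → 0` with all
`T_i ∈ Add T`. -/
def CoresAdd [HasCoproducts.{0} 𝒞] (Xc : Set 𝒞) (T : 𝒞) : ℕ → 𝒞 → Prop
  | 0, M => InAdd T M
  | n + 1, M => ∃ (B C : 𝒞) (i : M ⟶ B) (g : B ⟶ C),
      InAdd T B ∧ IsXSes Xc i g ∧ CoresAdd Xc T n C

/-- `XResLen C n M`: there is an exact sequence `0 → X_n → ⋯ → X_0 → M → 0` with all
`X_i ∈ C`. -/
def XResLen (C : Set 𝒞) : ℕ → 𝒞 → Prop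
  | 0, M => M ∈ C
  | n + 1, M => ∃ (X0 K : 𝒞) (i : K ⟶ X0) (g : X0 ⟶ M) (w : i ≫ g = 0),
      X0 ∈ C ∧ Mono i ∧ Epi g ∧ (ShortComplex.mk i g w).Exact ∧ XResLen C n K

/-- `T` is an `n`-`X`-tilting object: `X`-dim `T ≤ n`, `T` is `X`-self-orthogonal, and every
`X ∈ Xc` has an `X`-exact `Add T`-coresolution `0 → X → T_0 → ⋯ → T_n → 0`. -/
def IsNXTilting [HasCoproducts.{0} 𝒞] (Xc : Set 𝒞) (n : ℕ) (T : 𝒞) : Prop :=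
  (∃ m ≤ n, XResLen Xc m T) ∧ XSelfOrth Xc T ∧ ∀ x ∈ Xc, CoresAdd Xc T n x

end Tilting

section AuxProof

open CategoryTheory CategoryTheory.Limits ZeroObject

set_option linter.unusedSectionVars false
set_option maxHeartbeats 1000000

variable {A : Type*} [Category A] [Abelian A]

lemma epi_of_xsurj (Xc : Set A) (hcf : ContravariantlyFinite Xc) (hadm : AdmissibleClass Xc)
    {E M : A} (q : E ⟶ M) (hl : ∀ x ∈ Xc, ∀ f : x ⟶ M, ∃ h : x ⟶ E, h ≫ q = f) : Epi q := by
  obtain ⟨c, f, hap⟩ := hcf M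
  haveI : Epi f := hadm M c f hap
  obtain ⟨h, hh⟩ := hl c hap.1 f
  exact epi_of_epi_fac hh

lemma xses_lift {Xc : Set A} {K B M : A} {i : K ⟶ B} {g : B ⟶ M} (hs : IsXSes Xc i g)
    {W : A} (t : W ⟶ B) (ht : t ≫ g = 0) : ∃ u : W ⟶ K, u ≫ i = t := by
  obtain ⟨hm, he, ⟨w, hex⟩, hlift⟩ := hs
  haveI := hm
  exact hex.lift' t ht

lemma isXSes_w {Xc : Set A} {K B M : A} {i : K ⟶ B} {g : B ⟶ M} (hs : IsXSes Xc i g) :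
    i ≫ g = 0 := hs.2.2.1.choose

lemma isXSes_kernel (Xc : Set A) {E M : A} (q : E ⟶ M) (hq : Epi q)
    (hl : ∀ x ∈ Xc, ∀ f : x ⟶ M, ∃ h : x ⟶ E, h ≫ q = f) :
    IsXSes Xc (kernel.ι q) q :=
  ⟨inferInstance, hq, ⟨kernel.condition q,
    ShortComplex.exact_of_f_is_kernel _ (kernelIsKernel q)⟩, hl⟩

lemma extVanish_of_iso {Xc : Set A} {T M N : A} (e : M ≅ N) (h : ExtVanish Xc T M) :
    ExtVanish Xc T N := by
  intro R i f hf
  obtain ⟨g, hg⟩ := h R i (f ≫ e.inv) (by rw [← Category.assoc, hf, zero_comp])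
  exact ⟨g ≫ e.hom, by rw [← Category.assoc, hg, Category.assoc, e.inv_hom_id,
    Category.comp_id]⟩

lemma extVanish_biprod_fst {Xc : Set A} {T M N : A} (h : ExtVanish Xc T (M ⊞ N)) :
    ExtVanish Xc T M := by
  intro R i f hf
  obtain ⟨g, hg⟩ := h R i (f ≫ biprod.inl) (by rw [← Category.assoc, hf, zero_comp])
  refine ⟨g ≫ biprod.fst, ?_⟩
  rw [← Category.assoc, hg, Category.assoc, biprod.inl_fst, Category.comp_id]

lemma extVanish_of_inAdd {Xc : Set A} [HasCoproducts.{0} A] {T : A} (hso : XSelfOrth Xc T)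
    {K : A} (hK : InAdd T K) : ExtVanish Xc T K := by
  obtain ⟨I, J, ⟨e⟩⟩ := hK
  exact extVanish_biprod_fst (extVanish_of_iso e.symm (hso I))

lemma extVanish_zero {Xc : Set A} {T Z : A} (hZ : IsZero Z) : ExtVanish Xc T Z := by
  intro R i f hf
  exact ⟨0, by rw [comp_zero]; exact (hZ.eq_of_tgt _ _)⟩

lemma extVanish_ext {Xc : Set A} {T L N K : A} {l : L ⟶ N} {p : N ⟶ K}
    (hs : IsXSes Xc l p) (hL : ExtVanish Xc T L) (hK : ExtVanish Xc T K) :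
    ExtVanish Xc T N := by
  intro R i f hf
  haveI : Mono l := hs.1
  obtain ⟨gB, hgB⟩ := hK R i (f ≫ p) (by rw [← Category.assoc, hf, zero_comp])
  obtain ⟨h, hh⟩ := hs.2.2.2 (R.P i) (R.mem i) gB
  have h1 : (f - R.d i ≫ h) ≫ p = 0 := by
    rw [Preadditive.sub_comp, Category.assoc, hh, hgB, sub_self]
  obtain ⟨u, hu⟩ := xses_lift hs _ h1
  have h2 : R.d (i + 1) ≫ u = 0 := by
    rw [← cancel_mono l, Category.assoc, hu, zero_comp, Preadditive.comp_sub, hf, zero_sub,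
      ← Category.assoc, R.dd i, zero_comp, neg_zero]
  obtain ⟨w, hw⟩ := hL R i u h2
  refine ⟨h + w ≫ l, ?_⟩
  rw [Preadditive.comp_add, ← Category.assoc, hw, hu]
  abel

lemma exists_goodRes (Xc : Set A) (hcf : ContravariantlyFinite Xc)
    (hadm : AdmissibleClass Xc) (M : A) :
    ∃ R : LeftRes Xc M, Epi R.ε ∧
      ∀ (W : A) (u : R.P 0 ⟶ W), R.d 0 ≫ u = 0 → ∃ t : M ⟶ W, R.ε ≫ t = u := by
  choose cx cf cap using hcf
  have cepi : ∀ N : A, Epi (cf N) := fun N => hadm N (cx N) (cf N) (cap N)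
  let seq : ℕ → A := fun n => Nat.rec (motive := fun _ => A) M (fun _ N => kernel (cf N)) n
  refine ⟨⟨fun n => cx (seq n), fun (n : ℕ) => cf (seq (n + 1)) ≫ kernel.ι (cf (seq n)),
    cf (seq 0), fun n => (cap (seq n)).1, ?_, ?_, ?_, ?_, ?_⟩, ?_, ?_⟩
  · intro n
    rw [Category.assoc, kernel.condition_assoc, zero_comp, comp_zero]
  · rw [Category.assoc, kernel.condition, comp_zero]
  · intro x hx f
    obtain ⟨g, hg⟩ := (cap (seq 0)).2 x hx f
    exact ⟨g, hg⟩
  · intro x hx f hf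
    obtain ⟨g, hg⟩ := (cap (seq 1)).2 x hx (kernel.lift (cf (seq 0)) f hf)
    refine ⟨g, ?_⟩
    show g ≫ cf (seq 1) ≫ kernel.ι (cf (seq 0)) = f
    rw [← Category.assoc, hg, kernel.lift_ι]
  · intro x hx n f hf
    have h1 : f ≫ cf (seq (n + 1)) = 0 := by
      rw [← cancel_mono (kernel.ι (cf (seq n))), Category.assoc, zero_comp]
      exact hf
    obtain ⟨g, hg⟩ := (cap (seq (n + 2))).2 x hx (kernel.lift (cf (seq (n + 1))) f h1)
    refine ⟨g, ?_⟩
    show g ≫ cf (seq (n + 2)) ≫ kernel.ι (cf (seq (n + 1))) = f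
    rw [← Category.assoc, hg, kernel.lift_ι]
  · exact cepi (seq 0)
  · intro W u hu
    haveI := cepi (seq 0)
    haveI := cepi (seq 1)
    have h1 : kernel.ι (cf (seq 0)) ≫ u = 0 := by
      rw [← cancel_epi (cf (seq 1)), ← Category.assoc, comp_zero]
      exact hu
    exact ⟨Abelian.epiDesc (cf (seq 0)) u h1, Abelian.comp_epiDesc _ _ _⟩

lemma lift_along_xses_T (Xc : Set A) (hcf : ContravariantlyFinite Xc)
    (hadm : AdmissibleClass Xc) {T L K' K : A} {l : L ⟶ K'} {p : K' ⟶ K}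
    (hs : IsXSes Xc l p) (hL : ExtVanish Xc T L) (t : T ⟶ K) :
    ∃ t' : T ⟶ K', t' ≫ p = t := by
  haveI : Mono l := hs.1
  obtain ⟨R, hε, hfac⟩ := exists_goodRes Xc hcf hadm T
  obtain ⟨u0, hu0⟩ := hs.2.2.2 (R.P 0) (R.mem 0) (R.ε ≫ t)
  have h1 : (R.d 0 ≫ u0) ≫ p = 0 := by
    rw [Category.assoc, hu0, ← Category.assoc, R.dε, zero_comp]
  obtain ⟨v, hv⟩ := xses_lift hs _ h1
  have h2 : R.d 1 ≫ v = 0 := by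
    rw [← cancel_mono l, Category.assoc, hv, ← Category.assoc, R.dd 0, zero_comp, zero_comp]
  obtain ⟨g, hg⟩ := hL R 0 v h2
  have h3 : R.d 0 ≫ (u0 - g ≫ l) = 0 := by
    rw [Preadditive.comp_sub, ← Category.assoc, hg, hv, sub_self]
  obtain ⟨t', ht'⟩ := hfac _ _ h3
  refine ⟨t', ?_⟩
  rw [← cancel_epi R.ε, ← Category.assoc, ht', Preadditive.sub_comp, Category.assoc,
    isXSes_w hs, comp_zero, sub_zero, hu0]

lemma lift_along_xses (Xc : Set A) [HasCoproducts.{0} A] (hcf : ContravariantlyFinite Xc)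
    (hadm : AdmissibleClass Xc) {T T' L K' K : A} (hT' : InAdd T T') {l : L ⟶ K'} {p : K' ⟶ K}
    (hs : IsXSes Xc l p) (hL : ExtVanish Xc T L) (t : T' ⟶ K) :
    ∃ t' : T' ⟶ K', t' ≫ p = t := by
  obtain ⟨I, J, ⟨e⟩⟩ := hT'
  have hli : ∀ i : I, ∃ ti : T ⟶ K',
      ti ≫ p = Sigma.ι (fun _ : I => T) i ≫ e.inv ≫ biprod.fst ≫ t :=
    fun i => lift_along_xses_T Xc hcf hadm hs hL _
  choose li hli using hli
  refine ⟨biprod.inl ≫ e.hom ≫ Sigma.desc li, ?_⟩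
  have h1 : Sigma.desc li ≫ p = e.inv ≫ biprod.fst ≫ t := by
    apply colimit.hom_ext
    intro j
    simp only [colimit.ι_desc_assoc, Cofan.mk_ι_app, hli]
  rw [Category.assoc, Category.assoc, h1, e.hom_inv_id_assoc, biprod.inl_fst_assoc]

noncomputable def biprodShuffle (W X Y Z : A) : (W ⊞ X) ⊞ (Y ⊞ Z) ≅ (W ⊞ Y) ⊞ (X ⊞ Z) where
  hom := biprod.lift
    (biprod.lift (biprod.fst ≫ biprod.fst) (biprod.snd ≫ biprod.fst))
    (biprod.lift (biprod.fst ≫ biprod.snd) (biprod.snd ≫ biprod.snd))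
  inv := biprod.lift
    (biprod.lift (biprod.fst ≫ biprod.fst) (biprod.snd ≫ biprod.fst))
    (biprod.lift (biprod.fst ≫ biprod.snd) (biprod.snd ≫ biprod.snd))
  hom_inv_id := by ext <;> simp
  inv_hom_id := by ext <;> simp

noncomputable def sigmaSumIsoBiprod [HasCoproducts.{0} A] (T : A) (I1 I2 : Type) :
    ((∐ fun _ : I1 => T) ⊞ (∐ fun _ : I2 => T)) ≅ ∐ fun _ : I1 ⊕ I2 => T where
  hom := biprod.desc (Sigma.desc fun a => Sigma.ι (fun _ : I1 ⊕ I2 => T) (Sum.inl a))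
    (Sigma.desc fun a => Sigma.ι (fun _ : I1 ⊕ I2 => T) (Sum.inr a))
  inv := Sigma.desc fun i => match i with
    | Sum.inl a => Sigma.ι (fun _ : I1 => T) a ≫ biprod.inl
    | Sum.inr a => Sigma.ι (fun _ : I2 => T) a ≫ biprod.inr
  hom_inv_id := by
    apply biprod.hom_ext' <;> apply colimit.hom_ext <;> intro j <;> simp
  inv_hom_id := by
    apply colimit.hom_ext
    rintro ⟨j⟩
    rcases j with a | a <;> simp

lemma inAdd_biprod [HasCoproducts.{0} A] {T A1 A2 : A} (h1 : InAdd T A1) (h2 : InAdd T A2) :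
    InAdd T (A1 ⊞ A2) := by
  obtain ⟨I1, J1, ⟨e1⟩⟩ := h1
  obtain ⟨I2, J2, ⟨e2⟩⟩ := h2
  exact ⟨I1 ⊕ I2, J1 ⊞ J2,
    ⟨(biprodShuffle A1 A2 J1 J2).trans ((biprod.mapIso e1 e2).trans
      (sigmaSumIsoBiprod T I1 I2))⟩⟩

lemma inAdd_zero [HasCoproducts.{0} A] {T : A} {Z : A} (hZ : IsZero Z) : InAdd T Z := by
  refine ⟨PUnit, ∐ fun _ : PUnit => T, ⟨?_⟩⟩
  refine ⟨biprod.snd, biprod.inr, ?_, biprod.inr_snd⟩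
  apply biprod.hom_ext'
  · apply hZ.eq_of_src
  · simp

lemma mono_of_src_isZero {Z Y : A} (hZ : IsZero Z) (f : Z ⟶ Y) : Mono f :=
  ⟨fun g h _ => hZ.eq_of_tgt g h⟩

lemma txClass_of_inAdd [HasCoproducts.{0} A] {Xc : Set A} {T : A} (hso : XSelfOrth Xc T)
    {K : A} (hK : InAdd T K) : TXClass Xc T K := by
  let Ks : ℕ → A := fun n => Nat.rec (motive := fun _ => A) K (fun _ _ => 0) n
  have hKs : ∀ n, Ks (n + 1) = (0 : A) := fun n => rfl
  refine ⟨Ks, Ks, fun n => 0, fun n => Nat.rec (motive := fun n => Ks n ⟶ Ks n) (𝟙 K)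
    (fun _ _ => 𝟙 0) n, rfl, ?_, ?_, ?_⟩
  · rintro (_ | n)
    · exact hK
    · exact inAdd_zero (isZero_zero A)
  · rintro (_ | n)
    · exact extVanish_of_inAdd hso hK
    · exact extVanish_zero (isZero_zero A)
  · rintro (_ | n)
    · refine ⟨mono_of_src_isZero (isZero_zero A) _, (by show Epi (𝟙 K); infer_instance),
        ⟨zero_comp, ?_⟩, fun x _ f => ⟨f, Category.comp_id f⟩⟩
      exact (ShortComplex.exact_iff_mono _ rfl).2 (by show Mono (𝟙 K); infer_instance)
    · refine ⟨mono_of_src_isZero (isZero_zero A) _, inferInstance,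
        ⟨zero_comp, ?_⟩, fun x _ f => ⟨f, Category.comp_id f⟩⟩
      exact (ShortComplex.exact_iff_mono _ rfl).2 (by show Mono (𝟙 (0 : A)); infer_instance)

lemma txClass_cover [HasCoproducts.{0} A] {Xc : Set A} {T M : A} (h : TXClass Xc T M) :
    ∃ (L T0 : A) (l : L ⟶ T0) (g : T0 ⟶ M), InAdd T T0 ∧ IsXSes Xc l g ∧
      TXClass Xc T L ∧ ExtVanish Xc T M := by
  obtain ⟨K, Tn, i, g, hK0, hAdd, hExt, hses⟩ := h
  subst hK0
  exact ⟨K 1, Tn 0, i 0, g 0, hAdd 0, hses 0,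
    ⟨fun n => K (n + 1), fun n => Tn (n + 1), fun n => i (n + 1), fun n => g (n + 1),
      rfl, fun n => hAdd (n + 1), fun n => hExt (n + 1), fun n => hses (n + 1)⟩, hExt 0⟩

lemma tx_step (Xc : Set A) [HasCoproducts.{0} A] (hcf : ContravariantlyFinite Xc)
    (hadm : AdmissibleClass Xc) {T A1 A2 TA B1 B2 TB C : A}
    (hTA : InAdd T TA) (hTB : InAdd T TB)
    {iA : A2 ⟶ TA} {gA : TA ⟶ A1} (hA : IsXSes Xc iA gA)
    {iB : B2 ⟶ TB} {gB : TB ⟶ B1} (hB : IsXSes Xc iB gB)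
    {a : A1 ⟶ C} {b : C ⟶ B1} (hC : IsXSes Xc a b)
    (hE1 : ExtVanish Xc T A1) :
    ∃ (C' : A) (ι' : C' ⟶ TA ⊞ TB) (q : TA ⊞ TB ⟶ C) (a' : A2 ⟶ C') (b' : C' ⟶ B2),
      IsXSes Xc ι' q ∧ IsXSes Xc a' b' := by
  haveI : Mono iA := hA.1
  haveI : Mono iB := hB.1
  haveI : Mono a := hC.1
  obtain ⟨φ, hφ⟩ := lift_along_xses Xc hcf hadm hTB hC hE1 gB
  set q : TA ⊞ TB ⟶ C := biprod.desc (gA ≫ a) φ with hqdef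
  have hinlq : biprod.inl ≫ q = gA ≫ a := biprod.inl_desc _ _
  have hinrq : biprod.inr ≫ q = φ := biprod.inr_desc _ _
  -- lifting property of q
  have hqlift : ∀ x ∈ Xc, ∀ f : x ⟶ C, ∃ h : x ⟶ TA ⊞ TB, h ≫ q = f := by
    intro x hx f
    obtain ⟨h, hh⟩ := hB.2.2.2 x hx (f ≫ b)
    have h1 : (f - h ≫ φ) ≫ b = 0 := by
      rw [Preadditive.sub_comp, Category.assoc, hφ, hh, sub_self]
    obtain ⟨u, hu⟩ := xses_lift hC _ h1
    obtain ⟨u', hu'⟩ := hA.2.2.2 x hx u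
    refine ⟨biprod.lift u' h, ?_⟩
    rw [hqdef, biprod.lift_desc, ← Category.assoc, hu', hu]
    abel
  have hq : Epi q := epi_of_xsurj Xc hcf hadm q hqlift
  have hqb : q ≫ b = biprod.snd ≫ gB := by
    apply biprod.hom_ext'
    · rw [← Category.assoc, hinlq, Category.assoc, isXSes_w hC, comp_zero,
        ← Category.assoc, biprod.inl_snd, zero_comp]
    · rw [← Category.assoc, hinrq, hφ, ← Category.assoc, biprod.inr_snd, Category.id_comp]
  have ha'w : (iA ≫ biprod.inl) ≫ q = 0 := by
    rw [Category.assoc, hinlq, ← Category.assoc, isXSes_w hA, zero_comp]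
  set a' : A2 ⟶ kernel q := kernel.lift q (iA ≫ biprod.inl) ha'w with ha'def
  have ha'ι : a' ≫ kernel.ι q = iA ≫ biprod.inl := kernel.lift_ι _ _ _
  have hιsnd : (kernel.ι q ≫ biprod.snd) ≫ gB = 0 := by
    rw [Category.assoc, ← hqb, ← Category.assoc, kernel.condition, zero_comp]
  obtain ⟨b', hb'⟩ := xses_lift hB _ hιsnd
  have hma' : Mono a' := by
    have : Mono (iA ≫ (biprod.inl : TA ⟶ TA ⊞ TB)) := mono_comp _ _
    exact mono_of_mono_fac ha'ι
  have hwa' : a' ≫ b' = 0 := by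
    rw [← cancel_mono iB, Category.assoc, hb', ← Category.assoc, ha'ι, Category.assoc,
      biprod.inl_snd, comp_zero, zero_comp]
  have hb'lift : ∀ x ∈ Xc, ∀ f : x ⟶ B2, ∃ h : x ⟶ kernel q, h ≫ b' = f := by
    intro x hx f
    have h0 : (f ≫ iB ≫ φ) ≫ b = 0 := by
      rw [Category.assoc, Category.assoc, hφ, isXSes_w hB, comp_zero]
    obtain ⟨u, hu⟩ := xses_lift hC _ h0
    obtain ⟨u', hu'⟩ := hA.2.2.2 x hx u
    have hE : (biprod.lift (-u') (f ≫ iB)) ≫ q = 0 := by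
      rw [hqdef, biprod.lift_desc, Preadditive.neg_comp, ← Category.assoc, hu', hu,
        Category.assoc]
      abel
    refine ⟨kernel.lift q _ hE, ?_⟩
    rw [← cancel_mono iB, Category.assoc, hb', ← Category.assoc, kernel.lift_ι,
      biprod.lift_snd]
  have key : ∀ (W : A) (k : W ⟶ kernel q), k ≫ b' = 0 → ∃ u : W ⟶ A2, u ≫ a' = k := by
    intro W k hk
    have h1 : (k ≫ kernel.ι q) ≫ biprod.snd = 0 := by
      rw [Category.assoc, ← hb', ← Category.assoc, hk, zero_comp]
    have h2 : k ≫ kernel.ι q = ((k ≫ kernel.ι q) ≫ biprod.fst) ≫ biprod.inl := by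
      apply biprod.hom_ext
      · rw [Category.assoc, Category.assoc, biprod.inl_fst, Category.comp_id]
      · rw [Category.assoc, Category.assoc, biprod.inl_snd, comp_zero, ← Category.assoc]
        exact h1
    have h3 : ((k ≫ kernel.ι q) ≫ biprod.fst) ≫ gA = 0 := by
      rw [← cancel_mono a, Category.assoc, zero_comp, ← hinlq, ← Category.assoc, ← h2,
        Category.assoc, kernel.condition, comp_zero]
    obtain ⟨u, hu⟩ := xses_lift hA _ h3
    refine ⟨u, ?_⟩
    rw [← cancel_mono (kernel.ι q), Category.assoc, ha'ι, ← Category.assoc, hu, ← h2]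
  refine ⟨kernel q, kernel.ι q, q, a', b', isXSes_kernel Xc q hq hqlift,
    hma', epi_of_xsurj Xc hcf hadm b' hb'lift, ⟨hwa', ?_⟩, hb'lift⟩
  apply ShortComplex.exact_of_f_is_kernel
  haveI := hma'
  exact KernelFork.IsLimit.ofι' a' hwa'
    (fun {W} k hk => ⟨(key W k hk).choose, (key W k hk).choose_spec⟩)

lemma txClass_ext (Xc : Set A) [HasCoproducts.{0} A] (hcf : ContravariantlyFinite Xc)
    (hadm : AdmissibleClass Xc) {T L N K : A} {l : L ⟶ N} {p : N ⟶ K}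
    (hs : IsXSes Xc l p) (hL : TXClass Xc T L) (hK : TXClass Xc T K) : TXClass Xc T N := by
  obtain ⟨KA, TA, iA, gA, hA0, hAddA, hExtA, hsesA⟩ := hL
  obtain ⟨KB, TB, iB, gB, hB0, hAddB, hExtB, hsesB⟩ := hK
  subst hA0
  subst hB0
  have step : ∀ (n : ℕ) (s : Σ' (Cn : A) (a : KA n ⟶ Cn) (b : Cn ⟶ KB n), IsXSes Xc a b),
      Nonempty (Σ' (s' : Σ' (Cn : A) (a : KA (n + 1) ⟶ Cn) (b : Cn ⟶ KB (n + 1)),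
          IsXSes Xc a b) (ι' : s'.1 ⟶ TA n ⊞ TB n) (q : TA n ⊞ TB n ⟶ s.1),
        IsXSes Xc ι' q) := by
    intro n s
    obtain ⟨Cn, sa, sb, hab⟩ := s
    obtain ⟨C', ι', q, a', b', h1, h2⟩ :=
      tx_step Xc hcf hadm (hAddA n) (hAddB n) (hsesA n) (hsesB n) hab (hExtA n)
    exact ⟨⟨⟨C', a', b', h2⟩, ι', q, h1⟩⟩
  have main : ∃ st : ∀ n : ℕ, Σ' (Cn : A) (a : KA n ⟶ Cn) (b : Cn ⟶ KB n), IsXSes Xc a b,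
      (st 0).1 = N ∧ ∀ n : ℕ, ∃ (ι' : (st (n + 1)).1 ⟶ TA n ⊞ TB n)
        (q : TA n ⊞ TB n ⟶ (st n).1), IsXSes Xc ι' q := by
    refine ⟨fun n => Nat.rec ⟨N, l, p, hs⟩
      (fun n s => (Classical.choice (step n s)).1) n, rfl, fun n => ?_⟩
    exact ⟨(Classical.choice (step n _)).2.1, (Classical.choice (step n _)).2.2.1,
      (Classical.choice (step n _)).2.2.2⟩
  obtain ⟨st, hst0, hlink⟩ := main
  refine ⟨fun n => (st n).1, fun n => TA n ⊞ TB n, fun n => (hlink n).choose,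
    fun n => (hlink n).choose_spec.choose, hst0, fun n => inAdd_biprod (hAddA n) (hAddB n),
    fun n => extVanish_ext (st n).2.2.2 (hExtA n) (hExtB n),
    fun n => (hlink n).choose_spec.choose_spec⟩

lemma presTX_ext (Xc : Set A) [HasCoproducts.{0} A] (hcf : ContravariantlyFinite Xc)
    (hadm : AdmissibleClass Xc) (T : A) :
    ∀ (m : ℕ) {L N K : A} (l : L ⟶ N) (p : N ⟶ K), IsXSes Xc l p → TXClass Xc T L →
      PresC Xc {K' | TXClass Xc T K'} m K → PresC Xc {K' | TXClass Xc T K'} m N := by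
  intro m
  induction m with
  | zero => intros; trivial
  | succ m ih =>
    intro L N K l p hs hL hK
    obtain ⟨B, K₁, i₁, g₁, hB, hses₁, hK₁⟩ := hK
    haveI : Mono l := hs.1
    haveI : Epi p := hs.2.1
    haveI : Mono i₁ := hses₁.1
    haveI : Epi g₁ := hses₁.2.1
    -- pullback of g₁ : B ⟶ K and p : N ⟶ K
    have hκw : i₁ ≫ g₁ = (0 : K₁ ⟶ N) ≫ p := by simp [isXSes_w hses₁]
    set κ : K₁ ⟶ pullback g₁ p := pullback.lift i₁ 0 hκw with hκdef
    have hκfst : κ ≫ pullback.fst g₁ p = i₁ := pullback.lift_fst _ _ _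
    have hκsnd : κ ≫ pullback.snd g₁ p = 0 := pullback.lift_snd _ _ _
    have hlw0 : (0 : L ⟶ B) ≫ g₁ = l ≫ p := by simp [isXSes_w hs]
    set lP : L ⟶ pullback g₁ p := pullback.lift 0 l hlw0 with hlPdef
    have hlPfst : lP ≫ pullback.fst g₁ p = 0 := pullback.lift_fst _ _ _
    have hlPsnd : lP ≫ pullback.snd g₁ p = l := pullback.lift_snd _ _ _
    -- IsXSes κ snd
    have hsnd : IsXSes Xc κ (pullback.snd g₁ p) := by
      refine ⟨mono_of_mono_fac hκfst, inferInstance, ⟨hκsnd, ?_⟩, ?_⟩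
      · apply ShortComplex.exact_of_f_is_kernel
        haveI : Mono κ := mono_of_mono_fac hκfst
        have key : ∀ (W : A) (t : W ⟶ pullback g₁ p), t ≫ pullback.snd g₁ p = 0 →
            ∃ u : W ⟶ K₁, u ≫ κ = t := by
          intro W t ht
          have h1 : (t ≫ pullback.fst g₁ p) ≫ g₁ = 0 := by
            rw [Category.assoc, pullback.condition, ← Category.assoc, ht, zero_comp]
          obtain ⟨u, hu⟩ := xses_lift hses₁ _ h1
          refine ⟨u, ?_⟩
          apply pullback.hom_ext
          · rw [Category.assoc, hκfst, hu]
          · rw [Category.assoc, hκsnd, comp_zero, ht]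
        exact KernelFork.IsLimit.ofι' κ hκsnd
          (fun {W} t ht => ⟨(key W t ht).choose, (key W t ht).choose_spec⟩)
      · intro x hx f
        obtain ⟨h, hh⟩ := hses₁.2.2.2 x hx (f ≫ p)
        exact ⟨pullback.lift h f hh, pullback.lift_snd _ _ _⟩
    -- IsXSes lP fst
    have hfst : IsXSes Xc lP (pullback.fst g₁ p) := by
      refine ⟨mono_of_mono_fac hlPsnd, inferInstance, ⟨hlPfst, ?_⟩, ?_⟩
      · apply ShortComplex.exact_of_f_is_kernel
        haveI : Mono lP := mono_of_mono_fac hlPsnd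
        have key : ∀ (W : A) (t : W ⟶ pullback g₁ p), t ≫ pullback.fst g₁ p = 0 →
            ∃ u : W ⟶ L, u ≫ lP = t := by
          intro W t ht
          have h1 : (t ≫ pullback.snd g₁ p) ≫ p = 0 := by
            rw [Category.assoc, ← pullback.condition, ← Category.assoc, ht, zero_comp]
          obtain ⟨u, hu⟩ := xses_lift hs _ h1
          refine ⟨u, ?_⟩
          apply pullback.hom_ext
          · rw [Category.assoc, hlPfst, comp_zero, ht]
          · rw [Category.assoc, hlPsnd, hu]
        exact KernelFork.IsLimit.ofι' lP hlPfst
          (fun {W} t ht => ⟨(key W t ht).choose, (key W t ht).choose_spec⟩)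
      · intro x hx f
        obtain ⟨h, hh⟩ := hs.2.2.2 x hx (f ≫ g₁)
        exact ⟨pullback.lift f h hh.symm, pullback.lift_fst _ _ _⟩
    exact ⟨pullback g₁ p, K₁, κ, pullback.snd g₁ p,
      txClass_ext Xc hcf hadm hfst hL hB, hsnd, hK₁⟩

lemma presC_mono {Xc : Set A} {C C' : Set A} (h : C ⊆ C') :
    ∀ (m : ℕ) {M : A}, PresC Xc C m M → PresC Xc C' m M := by
  intro m
  induction m with
  | zero => intros; trivial
  | succ m ih =>
    rintro M ⟨B, K, i, g, hB, hses, hK⟩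
    exact ⟨B, K, i, g, h hB, hses, ih hK⟩

lemma pres_sub (Xc : Set A) [HasCoproducts.{0} A] (hcf : ContravariantlyFinite Xc)
    (hadm : AdmissibleClass Xc) (T : A) :
    ∀ (m : ℕ) {M : A}, PresC Xc {K' | TXClass Xc T K'} m M →
      PresC Xc {K' | InAdd T K'} m M := by
  intro m
  induction m with
  | zero => intros; trivial
  | succ m ih =>
    rintro M ⟨B, K, i, g, hB, hs, hK⟩
    obtain ⟨L, T₀, lB, gB, hT₀, hsesB, hLTX, _⟩ := txClass_cover hB
    haveI : Epi g := hs.2.1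
    haveI : Epi gB := hsesB.2.1
    haveI : Mono i := hs.1
    haveI : Mono lB := hsesB.1
    set c : T₀ ⟶ M := gB ≫ g with hcdef
    have hclift : ∀ x ∈ Xc, ∀ f : x ⟶ M, ∃ h : x ⟶ T₀, h ≫ c = f := by
      intro x hx f
      obtain ⟨h, hh⟩ := hs.2.2.2 x hx f
      obtain ⟨h', hh'⟩ := hsesB.2.2.2 x hx h
      exact ⟨h', by rw [hcdef, ← Category.assoc, hh', hh]⟩
    haveI hce : Epi c := epi_comp _ _
    have hc : IsXSes Xc (kernel.ι c) c := isXSes_kernel Xc c hce hclift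
    -- λ : L ⟶ kernel c and π : kernel c ⟶ K
    have hlw : lB ≫ c = 0 := by rw [hcdef, ← Category.assoc, isXSes_w hsesB, zero_comp]
    set lam : L ⟶ kernel c := kernel.lift c lB hlw with hlamdef
    have hlamι : lam ≫ kernel.ι c = lB := kernel.lift_ι _ _ _
    have hπw : (kernel.ι c ≫ gB) ≫ g = 0 := by
      rw [Category.assoc, ← hcdef, kernel.condition]
    obtain ⟨π, hπ⟩ := xses_lift hs _ hπw
    have hses : IsXSes Xc lam π := by
      refine ⟨mono_of_mono_fac hlamι, ?_, ⟨?_, ?_⟩, ?_⟩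
      · -- Epi π
        apply epi_of_xsurj Xc hcf hadm
        intro x hx f
        obtain ⟨h, hh⟩ := hsesB.2.2.2 x hx (f ≫ i)
        have h1 : h ≫ c = 0 := by
          rw [hcdef, ← Category.assoc, hh, Category.assoc, isXSes_w hs, comp_zero]
        refine ⟨kernel.lift c h h1, ?_⟩
        rw [← cancel_mono i, Category.assoc, hπ, ← Category.assoc, kernel.lift_ι, hh]
      · rw [← cancel_mono i, Category.assoc, hπ, ← Category.assoc, hlamι, isXSes_w hsesB,
          zero_comp]
      · apply ShortComplex.exact_of_f_is_kernel
        haveI : Mono lam := mono_of_mono_fac hlamι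
        have hw0 : lam ≫ π = 0 := by
          rw [← cancel_mono i, Category.assoc, hπ, ← Category.assoc, hlamι,
            isXSes_w hsesB, zero_comp]
        have key : ∀ (W : A) (t : W ⟶ kernel c), t ≫ π = 0 → ∃ u : W ⟶ L, u ≫ lam = t := by
          intro W t ht
          have h1 : (t ≫ kernel.ι c) ≫ gB = 0 := by
            rw [Category.assoc, ← hπ, ← Category.assoc, ht, zero_comp]
          obtain ⟨u, hu⟩ := xses_lift hsesB _ h1
          refine ⟨u, ?_⟩
          rw [← cancel_mono (kernel.ι c), Category.assoc, hlamι, hu]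
        exact KernelFork.IsLimit.ofι' lam hw0
          (fun {W} t ht => ⟨(key W t ht).choose, (key W t ht).choose_spec⟩)
      · intro x hx f
        obtain ⟨h, hh⟩ := hsesB.2.2.2 x hx (f ≫ i)
        have h1 : h ≫ c = 0 := by
          rw [hcdef, ← Category.assoc, hh, Category.assoc, isXSes_w hs, comp_zero]
        refine ⟨kernel.lift c h h1, ?_⟩
        rw [← cancel_mono i, Category.assoc, hπ, ← Category.assoc, kernel.lift_ι, hh]
    have hN : PresC Xc {K' | TXClass Xc T K'} m (kernel c) :=
      presTX_ext Xc hcf hadm T m lam π hses hLTX hK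
    exact ⟨T₀, kernel c, kernel.ι c, c, hT₀, hc, ih hN⟩

end AuxProof

/-- If `T` is `X`-self-orthogonal with respect to an admissible balanced pair `(X, Y)`, then
`Pres^n_X(_T X) = Pres^n_X(T)` for every `n ≥ 1`. -/
theorem presC_TX_eq_presC_addT {A : Type*} [Category A] [Abelian A] [HasCoproducts.{0} A]
    (Xc Yc : Set A) (hbp : BalancedPair Xc Yc) (hadm : AdmissibleClass Xc)
    (T : A) (hso : XSelfOrth Xc T) :
    ∀ n : ℕ, 1 ≤ n →
      {M : A | PresC Xc {K | TXClass Xc T K} n M} =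
        {M : A | PresC Xc {K | InAdd T K} n M} := by
  intro n _
  ext M
  simp only [Set.mem_setOf_eq]
  constructor
  · exact fun h => pres_sub Xc hbp.1 hadm T n h
  · exact fun h => presC_mono (fun K hK => txClass_of_inAdd hso hK) n h
end
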